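/- Let R be a commutative ring, M a flat R-module, N a finitely presented R-module, and f : N → M an R-linear map. Then there exist a finitely generated free R-module L and R-linear maps g : N → L and h : L → M such that h ∘ g = f. -/

import Mathlib

universe u

/-- Every linear map from a finitely presented module to a flat module factors through a
finitely generated free module. -/
theorem factors_through_free_of_flat
    (R : Type u) [CommRing R]
    (N : Type u) [AddCommGroup N] [Module R N] [Module.FinitePresentation R N]
    (M : Type u) [AddCommGroup M] [Module R M] [Module.Flat R M]
    (f : N →ₗ[R] M) :
    ∃ (n : ℕ) (g : N →ₗ[R] (Fin n → R)) (h : (Fin n → R) →ₗ[R] M),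
      h ∘ₗ g = f := by
  obtain ⟨n, g, h, hf⟩ := Module.Flat.exists_factorization_of_isFinitelyPresented f
  let e : ((Fin n) →₀ R) ≃ₗ[R] (Fin (Fintype.card (Fin n)) → R) :=
    (Finsupp.linearEquivFunOnFinite R R (Fin n)).trans
      (LinearEquiv.funCongrLeft R R (Fintype.equivFin (Fin n)).symm)
  exact ⟨Fintype.card (Fin n), e.toLinearMap ∘ₗ g, h ∘ₗ e.symm.toLinearMap, by
    rw [hf]; ext x; simp⟩
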